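/- Let L be a countable first-order language, U an ℵ₁-incomplete ultrafilter on a set I, and M an L-structure. Then the ultrapower M^I/U is ℵ₁-saturated: every countable set of L-formulas in one free variable, with parameters from M^I/U, which is finitely satisfiable in M^I/U, is realized by an element of M^I/U. -/

import Mathlib

open FirstOrder

/-- Let `L` be a countable first-order language, `U` an `ℵ₁`-incomplete ultrafilter on a set
`I`, and `M` an `L`-structure. Then the ultrapower `M^I/U` is `ℵ₁`-saturated: every countable
set of `L`-formulas in one free variable with parameters from `M^I/U` that is finitely
satisfiable in `M^I/U` is realized in `M^I/U`. -/
theorem stmt_6 {I : Type u} (L : FirstOrder.Language.{u, u})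
    (hL : L.card ≤ Cardinal.aleph0)
    (U : Ultrafilter I) (B : ℕ → Set I) (hB : ∀ n, B n ∈ U) (hempty : (⋂ n, B n) = ∅)
    (M : Type u) [L.Structure M]
    (φ : ℕ → L.Formula ((↑U : Filter I).Product (fun _ : I => M) ⊕ Unit))
    (hfs : ∀ s : Finset ℕ, ∃ x : (↑U : Filter I).Product (fun _ : I => M),
      ∀ k ∈ s, (φ k).Realize (Sum.elim id fun _ => x)) :
    ∃ x : (↑U : Filter I).Product (fun _ : I => M),
      ∀ k : ℕ, (φ k).Realize (Sum.elim id fun _ => x) := by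
  classical
  have hN : True := trivial
  haveI : Nonempty I := Filter.nonempty_of_neBot (↑U : Filter I)
  obtain ⟨x0, -⟩ := hfs ∅
  obtain ⟨f0, -⟩ := Quotient.exists_rep x0
  haveI : Nonempty M := ⟨f0 (Classical.arbitrary I)⟩
  -- choose representatives of every element of the ultrapower
  have hrep' : ∀ x : (↑U : Filter I).Product (fun _ : I => M), ∃ f : I → M, (↑f : (↑U : Filter I).Product (fun _ : I => M)) = x := fun x => Quotient.exists_rep x
  choose rep hrep using hrep'
  -- choose representative witnesses for finite satisfiability
  have hg' : ∀ k : ℕ, ∃ g : I → M,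
      ∀ j ≤ k, (φ j).Realize (Sum.elim id fun _ => (↑g : (↑U : Filter I).Product (fun _ : I => M))) := by
    intro k
    obtain ⟨x, hx⟩ := hfs (Finset.range (k + 1))
    refine ⟨rep x, fun j hj => ?_⟩
    rw [hrep x]
    exact hx j (Finset.mem_range.2 (Nat.lt_succ_of_le hj))
  choose g hg using hg'
  -- pointwise realization predicate
  set Q : ℕ → M → I → Prop := fun j m a =>
    (φ j).Realize (Sum.elim (fun n : (↑U : Filter I).Product (fun _ : I => M) => rep n a) fun _ : Unit => m) with hQ
  -- Łoś's theorem specialized to our situation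
  have los : ∀ (j : ℕ) (f : I → M),
      (φ j).Realize (Sum.elim id fun _ => (↑f : (↑U : Filter I).Product (fun _ : I => M))) ↔ ∀ᶠ a in (↑U : Filter I), Q j (f a) a := by
    intro j f
    have h := Language.Ultraproduct.realize_formula_cast (u := U) (φ j)
      (Sum.elim rep fun _ : Unit => f)
    have h1 : (fun i => (↑(Sum.elim rep (fun _ : Unit => f) i) : (↑U : Filter I).Product (fun _ : I => M))) =
        Sum.elim id fun _ => (↑f : (↑U : Filter I).Product (fun _ : I => M)) := by
      funext i
      cases i with
      | inl n => exact hrep n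
      | inr u => rfl
    have h2 : ∀ a : I, (fun i => Sum.elim rep (fun _ : Unit => f) i a) =
        Sum.elim (fun n : (↑U : Filter I).Product (fun _ : I => M) => rep n a) fun _ : Unit => f a := by
      intro a
      funext i
      cases i with
      | inl n => rfl
      | inr u => rfl
    rw [h1] at h
    refine h.trans ?_
    exact Filter.eventually_congr (Filter.Eventually.of_forall fun a => by rw [h2 a])
  -- the sets from the witnesses
  have hA : ∀ k : ℕ, ∀ᶠ a in (↑U : Filter I), ∀ j ≤ k, Q j (g k a) a := by
    intro k
    have : ∀ j ∈ Finset.range (k + 1), ∀ᶠ a in (↑U : Filter I), Q j (g k a) a := by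
      intro j hj
      exact (los j (g k)).1 (hg k j (Nat.lt_succ_iff.1 (Finset.mem_range.1 hj)))
    have := (Filter.eventually_all_finset (Finset.range (k + 1))).2 this
    filter_upwards [this] with a ha j hj
    exact ha j (Finset.mem_range.2 (Nat.lt_succ_of_le hj))
  -- the decreasing chain of sets
  set D : ℕ → Set I := fun k =>
    ⋂ m ∈ Finset.range (k + 1), (B m ∩ {a | ∀ j ≤ m, Q j (g m a) a}) with hD
  have hDmem : ∀ k, D k ∈ (↑U : Filter I) := by
    intro k
    refine (Filter.biInter_finset_mem _).2 fun m _ => Filter.inter_mem (hB m) (hA m)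
  have hDanti : ∀ k l, k ≤ l → D l ⊆ D k := by
    intro k l hkl a ha
    simp only [hD, Set.mem_iInter] at ha ⊢
    intro m hm
    exact ha m (Finset.mem_range.2 (lt_of_lt_of_le (Finset.mem_range.1 hm)
      (Nat.succ_le_succ hkl)))
  have hDempty : ∀ a : I, ∃ k, a ∉ D k := by
    intro a
    by_contra h
    push_neg at h
    have : a ∈ ⋂ n, B n := by
      refine Set.mem_iInter.2 fun n => ?_
      have := h n
      simp only [hD, Set.mem_iInter] at this
      exact (this n (Finset.mem_range.2 (Nat.lt_succ_self n))).1
    rw [hempty] at this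
    exact this
  -- the diagonal element
  set nn : I → ℕ := fun a => Nat.find (hDempty a) - 1 with hnn
  set f : I → M := fun a => g (nn a) a with hf
  have key : ∀ (k : ℕ) (a : I), a ∈ D k → Q k (f a) a := by
    intro k a ha
    have hlt : k < Nat.find (hDempty a) := by
      rw [Nat.lt_find_iff]
      intro m hm
      simp only [not_not]
      exact hDanti m k hm ha
    have hnna : nn a = Nat.find (hDempty a) - 1 := rfl
    have hk : k ≤ nn a := by omega
    have hna : a ∈ D (nn a) := by
      by_contra h
      have h2 : Nat.find (hDempty a) ≤ nn a := Nat.find_le h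
      omega
    simp only [hD, Set.mem_iInter] at hna
    have := (hna (nn a) (Finset.mem_range.2 (Nat.lt_succ_self _))).2
    exact this k hk
  refine ⟨(↑f : (↑U : Filter I).Product (fun _ : I => M)), fun k => ?_⟩
  refine (los k f).2 ?_
  filter_upwards [hDmem k] with a ha
  exact key k a ha
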